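/- Let k ≥ 2, let G be a digraph on {1,…,2^k}, and let P_π̃ be the weighted poset induced by G. If the extended binary Hamming code H̃_k is a 2-perfect G-code, then Ω₁²(1) = 1 + (1/2)·Ω₁¹(1)·(Ω₁¹(1) − 3), i.e., 2·Ω₁²(1) = 2 + Ω₁¹(1)·(Ω₁¹(1) − 3), where Ω_j^ω(i) denotes the number of order ideals of P_π̃ of cardinality i, total weight ω, and exactly j maximal elements (so Ω₁¹(1) is the number of minimal elements of P_π̃ of weight 1 and Ω₁²(1) is the number of minimal elements of weight 2). -/

import Mathlib

open Classical

noncomputable def wtG {V : Type*} [Fintype V] (E : V → V → Prop) (x : V → ZMod 2) : ℕ :=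
  (Finset.univ.filter (fun v => ∃ u, x u ≠ 0 ∧ Relation.ReflTransGen E u v)).card

noncomputable def dG {V : Type*} [Fintype V] (E : V → V → Prop) (x y : V → ZMod 2) : ℕ :=
  wtG E (x - y)

def IsCovering {β : Type*} (d : β → β → ℕ) (C : Set β) (r : ℕ) : Prop :=
  ∀ x, ∃ c ∈ C, d c x ≤ r

def IsPacking {β : Type*} (d : β → β → ℕ) (C : Set β) (r : ℕ) : Prop :=
  ∀ c₁ ∈ C, ∀ c₂ ∈ C, c₁ ≠ c₂ → ∀ x, ¬(d c₁ x ≤ r ∧ d c₂ x ≤ r)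

def sim {V : Type*} (E : V → V → Prop) (u v : V) : Prop :=
  u = v ∨ (Relation.TransGen E u v ∧ Relation.TransGen E v u)

theorem sim_equivalence {V : Type*} (E : V → V → Prop) : Equivalence (sim E) := by
  constructor
  · intro x; exact Or.inl rfl
  · intro x y h
    rcases h with h | ⟨a, b⟩
    · exact Or.inl h.symm
    · exact Or.inr ⟨b, a⟩
  · intro x y z h1 h2
    rcases h1 with h1 | ⟨a, b⟩
    · subst h1; exact h2
    · rcases h2 with h2 | ⟨c, d⟩
      · subst h2; exact Or.inr ⟨a, b⟩
      · exact Or.inr ⟨a.trans c, d.trans b⟩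

def simSetoid {V : Type*} (E : V → V → Prop) : Setoid V :=
  ⟨sim E, sim_equivalence E⟩

noncomputable instance {V : Type*} [Fintype V] (E : V → V → Prop) :
    Fintype (Quotient (simSetoid E)) :=
  Fintype.ofFinite _

def clsLe {V : Type*} (E : V → V → Prop) (c d : Quotient (simSetoid E)) : Prop :=
  c = d ∨ ∃ u v, Quotient.mk (simSetoid E) u = c ∧ Quotient.mk (simSetoid E) v = d ∧
    Relation.TransGen E v u

noncomputable def clsWt {V : Type*} [Fintype V] (E : V → V → Prop)
    (c : Quotient (simSetoid E)) : ℕ :=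
  (Finset.univ.filter (fun v => Quotient.mk (simSetoid E) v = c)).card

noncomputable def phiTilde {V : Type*} (E : V → V → Prop) (x : V → ZMod 2) :
    Quotient (simSetoid E) → ZMod 2 :=
  fun c => if ∀ v, Quotient.mk (simSetoid E) v = c → x v = 0 then 0 else 1

def extHamming (k : ℕ) : Set (Fin (2 ^ k) → ZMod 2) :=
  {x | (∑ i, x i) = 0 ∧
    ∀ j < k, (∑ i ∈ Finset.univ.filter (fun i : Fin (2 ^ k) => Nat.testBit i.val j), x i) = 0}

noncomputable def Omega {α : Type*} [Fintype α] (le : α → α → Prop) (π : α → ℕ)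
    (j ω i : ℕ) : ℕ :=
  (Finset.univ.filter (fun I : Finset α =>
      (∀ a ∈ I, ∀ b, le b a → b ∈ I) ∧
      I.card = i ∧ (∑ a ∈ I, π a) = ω ∧
      (I.filter (fun a => ∀ b ∈ I, le a b → a = b)).card = j)).card

namespace Stmt19

open Finset

variable {k : ℕ}

lemma zmod_ne_zero {a : ZMod 2} (h : a ≠ 0) : a = 1 := by revert h; revert a; decide

lemma zmod_add_self (a : ZMod 2) : a + a = 0 := by revert a; decide

noncomputable def ev (v : Fin (2^k)) : Fin (2^k) → ZMod 2 := fun u => if u = v then 1 else 0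

noncomputable def supp (x : Fin (2^k) → ZMod 2) : Finset (Fin (2^k)) :=
  Finset.univ.filter (fun v => x v ≠ 0)

lemma mem_supp {x : Fin (2^k) → ZMod 2} {v : Fin (2^k)} : v ∈ supp x ↔ x v ≠ 0 := by
  simp [supp]

lemma sum_ev (s : Finset (Fin (2^k))) (p : Fin (2^k)) :
    ∑ i ∈ s, ev p i = if p ∈ s then 1 else 0 := by
  simpa [ev] using Finset.sum_ite_eq' s p (fun _ => (1 : ZMod 2))

lemma sum_eq_card_supp (x : Fin (2^k) → ZMod 2) :
    ∑ i, x i = ((supp x).card : ZMod 2) := by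
  have h1 : ∑ i, x i = ∑ i ∈ supp x, x i := by
    rw [supp, Finset.sum_filter_ne_zero]
  rw [h1]
  have h2 : ∑ i ∈ supp x, x i = ∑ i ∈ supp x, 1 := by
    apply Finset.sum_congr rfl
    intro i hi
    exact zmod_ne_zero (mem_supp.mp hi)
  rw [h2, Finset.sum_const, nsmul_eq_mul, mul_one]

lemma ev_add_self (z : Fin (2^k)) : ev z + ev z = 0 := by
  funext i; exact zmod_add_self _

lemma supp_ev (v : Fin (2^k)) : supp (ev v) = {v} := by
  ext i; simp [supp, ev]

lemma bool4 : ∀ a b c d : Bool, (((a ^^ b) ^^ c) ^^ d) = false →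
    ((if a then 1 else 0) + (if b then 1 else 0) + (if c then 1 else 0)
      + (if d then 1 else 0) : ZMod 2) = 0 := by decide

lemma bool4' : ∀ a b c d : Bool,
    (((if a then 1 else 0) + (if b then 1 else 0) + (if c then 1 else 0)
      + (if d then 1 else 0) : ZMod 2) = 0) → (((a ^^ b) ^^ c) ^^ d) = false := by decide

lemma testBit_high {p : Fin (2^k)} {j : ℕ} (hj : ¬ j < k) : p.val.testBit j = false := by
  apply Nat.testBit_eq_false_of_lt
  exact lt_of_lt_of_le p.isLt (Nat.pow_le_pow_right (by norm_num) (le_of_not_gt hj))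

lemma mem_code_four {p q r s : Fin (2^k)}
    (h : p.val ^^^ q.val ^^^ r.val ^^^ s.val = 0) :
    (ev p + ev q + ev r + ev s) ∈ extHamming k := by
  constructor
  · simp only [Pi.add_apply, Finset.sum_add_distrib, sum_ev, Finset.mem_univ, if_true]
    decide
  · intro j hj
    simp only [Pi.add_apply, Finset.sum_add_distrib, sum_ev, Finset.mem_filter,
      Finset.mem_univ, true_and]
    have hb : (((p.val.testBit j ^^ q.val.testBit j) ^^ r.val.testBit j)
        ^^ s.val.testBit j) = false := by
      have := congrArg (fun n => Nat.testBit n j) h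
      simpa [Nat.testBit_xor, Nat.zero_testBit] using this
    exact bool4 _ _ _ _ hb

lemma code_four_xor {p q r s : Fin (2^k)}
    (hc : (ev p + ev q + ev r + ev s) ∈ extHamming k) :
    p.val ^^^ q.val ^^^ r.val ^^^ s.val = 0 := by
  apply Nat.eq_of_testBit_eq
  intro j
  rw [Nat.zero_testBit]
  simp only [Nat.testBit_xor]
  by_cases hj : j < k
  · have h2 := hc.2 j hj
    simp only [Pi.add_apply, Finset.sum_add_distrib, sum_ev, Finset.mem_filter,
      Finset.mem_univ, true_and] at h2
    exact bool4' _ _ _ _ h2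
  · simp [testBit_high (p := p) hj, testBit_high (p := q) hj,
      testBit_high (p := r) hj, testBit_high (p := s) hj]

lemma code_pair_xor {p q : Fin (2^k)}
    (hc : (ev p + ev q) ∈ extHamming k) : p = q := by
  have h4 : (ev p + ev q + ev p + ev p) ∈ extHamming k := by
    have : ev p + ev q + ev p + ev p = ev p + ev q := by
      have hz : ∀ a b : ZMod 2, a + b + a + a = a + b := by decide
      funext i; simp only [Pi.add_apply]; exact hz _ _
    rw [this]; exact hc
  have := code_four_xor h4
  have hv : p.val = q.val := by
    have h1 : p.val ^^^ q.val ^^^ p.val ^^^ p.val = p.val ^^^ q.val := by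
      rw [Nat.xor_assoc, Nat.xor_self, Nat.xor_zero]
    rw [h1] at this
    exact Nat.xor_eq_zero_iff.mp this
  exact Fin.ext hv

end Stmt19
namespace Stmt19

open Finset

variable {k : ℕ} {E : Fin (2^k) → Fin (2^k) → Prop}

noncomputable def cl (E : Fin (2^k) → Fin (2^k) → Prop) (v : Fin (2^k)) : Finset (Fin (2^k)) :=
  Finset.univ.filter (fun w => Relation.ReflTransGen E v w)

lemma mem_cl {v w : Fin (2^k)} : w ∈ cl E v ↔ Relation.ReflTransGen E v w := by simp [cl]

lemma mem_cl_self (v : Fin (2^k)) : v ∈ cl E v := mem_cl.mpr Relation.ReflTransGen.refl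

lemma cl_subset {u w : Fin (2^k)} (h : Relation.ReflTransGen E u w) : cl E w ⊆ cl E u := by
  intro z hz
  exact mem_cl.mpr (h.trans (mem_cl.mp hz))

lemma wtG_ev (v : Fin (2^k)) : wtG E (ev v) = (cl E v).card := by
  unfold wtG cl
  congr 1
  ext w
  simp only [Finset.mem_filter, Finset.mem_univ, true_and]
  constructor
  · rintro ⟨u, hu, hr⟩
    have : u = v := by by_contra h; simp [ev, h] at hu
    rwa [this] at hr
  · intro h
    exact ⟨v, by simp [ev], h⟩

lemma wtG_pair {p q : Fin (2^k)} (hpq : p ≠ q) :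
    wtG E (ev p + ev q) = (cl E p ∪ cl E q).card := by
  unfold wtG
  congr 1
  ext w
  simp only [Finset.mem_filter, Finset.mem_univ, true_and, Finset.mem_union, mem_cl]
  constructor
  · rintro ⟨u, hu, hr⟩
    have : u = p ∨ u = q := by
      by_contra h
      push_neg at h
      simp [ev, Pi.add_apply, h.1, h.2] at hu
    rcases this with h | h
    · exact Or.inl (by rwa [h] at hr)
    · exact Or.inr (by rwa [h] at hr)
  · rintro (h | h)
    · exact ⟨p, by simp [ev, Pi.add_apply, hpq], h⟩
    · exact ⟨q, by simp [ev, Pi.add_apply, hpq.symm], h⟩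

lemma supp_card_le_wtG (x : Fin (2^k) → ZMod 2) : (supp x).card ≤ wtG E x := by
  apply Finset.card_le_card
  intro v hv
  simp only [wtG, Finset.mem_filter, Finset.mem_univ, true_and]
  exact ⟨v, mem_supp.mp hv, Relation.ReflTransGen.refl⟩

lemma supp_empty_eq {y : Fin (2^k) → ZMod 2} (h : supp y = ∅) : y = 0 := by
  funext i
  by_contra hi
  have : i ∈ supp y := mem_supp.mpr hi
  simp [h] at this

lemma supp_singleton_eq {y : Fin (2^k) → ZMod 2} {u : Fin (2^k)} (h : supp y = {u}) :
    y = ev u := by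
  funext i
  by_cases hi : i = u
  · subst hi
    have : i ∈ supp y := by rw [h]; exact Finset.mem_singleton_self _
    simp [ev, zmod_ne_zero (mem_supp.mp this)]
  · have : i ∉ supp y := by rw [h]; simp [hi]
    rw [mem_supp] at this
    push_neg at this
    simp [ev, hi, this]

lemma supp_pair_eq {y : Fin (2^k) → ZMod 2} {r s : Fin (2^k)} (hrs : r ≠ s)
    (h : supp y = {r, s}) : y = ev r + ev s := by
  funext i
  by_cases hir : i = r
  · subst hir
    have : i ∈ supp y := by rw [h]; simp
    simp [ev, Pi.add_apply, hrs, zmod_ne_zero (mem_supp.mp this)]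
  · by_cases his : i = s
    · subst his
      have : i ∈ supp y := by rw [h]; simp
      simp [ev, Pi.add_apply, hrs.symm, zmod_ne_zero (mem_supp.mp this)]
    · have : i ∉ supp y := by rw [h]; simp [hir, his]
      rw [mem_supp] at this
      push_neg at this
      simp [ev, Pi.add_apply, hir, his, this]

lemma sub_eq_add (f g : Fin (2^k) → ZMod 2) : f - g = f + g := by
  funext i
  have : ∀ a b : ZMod 2, a - b = a + b := by decide
  exact this _ _

lemma zero_mem_code : (0 : Fin (2^k) → ZMod 2) ∈ extHamming k := by
  constructor
  · simp
  · intro j _; simp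

end Stmt19
namespace Stmt19

open Finset

variable {k : ℕ} {E : Fin (2^k) → Fin (2^k) → Prop}

lemma card_odd_le_two {n : ℕ} (h : n ≤ 2) (hz : (n : ZMod 2) = 1) : n = 1 := by
  interval_cases n
  · exfalso; revert hz; decide
  · rfl
  · exfalso; revert hz; decide

lemma card_even_le_two {n : ℕ} (h : n ≤ 2) (hz : (n : ZMod 2) = 0) : n = 0 ∨ n = 2 := by
  interval_cases n
  · exact Or.inl rfl
  · exfalso; revert hz; decide
  · exact Or.inr rfl

section Core

variable (hcov : IsCovering (dG E) (extHamming k) 2)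
  (hpack : IsPacking (dG E) (extHamming k) 2)

include hcov

lemma cl_card_le_two (v : Fin (2^k)) : (cl E v).card ≤ 2 := by
  obtain ⟨c, hc, hd⟩ := hcov (ev v)
  rw [dG, sub_eq_add] at hd
  set y := c + ev v with hy
  have hcy : c = y + ev v := by
    rw [hy, add_assoc, ev_add_self, add_zero]
  have hsy : (supp y).card ≤ 2 := le_trans (supp_card_le_wtG y) hd
  have hpar : ((supp y).card : ZMod 2) = 1 := by
    have h0 : ∑ i, c i = 0 := hc.1
    rw [hcy] at h0
    simp only [Pi.add_apply, Finset.sum_add_distrib] at h0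
    rw [sum_eq_card_supp, sum_ev] at h0
    simp only [Finset.mem_univ, if_true] at h0
    have : ∀ a : ZMod 2, a + 1 = 0 → a = 1 := by decide
    exact this _ h0
  have h1 : (supp y).card = 1 := card_odd_le_two hsy hpar
  obtain ⟨u, hu⟩ := Finset.card_eq_one.mp h1
  have hyu : y = ev u := supp_singleton_eq hu
  by_cases huv : u = v
  · subst huv
    rw [hyu, wtG_ev] at hd
    exact hd
  · exfalso
    rw [hyu] at hcy
    have : (ev u + ev v) ∈ extHamming k := by rwa [← hcy]
    exact huv (code_pair_xor this)

lemma exists_closed_pair {p q : Fin (2^k)} (hpq : p ≠ q) :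
    ∃ r s : Fin (2^k), r ≠ s ∧ r.val ^^^ s.val = p.val ^^^ q.val ∧
      wtG E (ev r + ev s) ≤ 2 := by
  by_cases hw : wtG E (ev p + ev q) ≤ 2
  · exact ⟨p, q, hpq, rfl, hw⟩
  obtain ⟨c, hc, hd⟩ := hcov (ev p + ev q)
  rw [dG, sub_eq_add] at hd
  set y := c + (ev p + ev q) with hy
  have hcy : c = ev p + ev q + y := by
    rw [hy]
    funext i
    simp only [Pi.add_apply]
    have : ∀ a b c : ZMod 2, a + b + (c + (a + b)) = c := by decide
    exact (this _ _ _).symm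
  have hsy : (supp y).card ≤ 2 := le_trans (supp_card_le_wtG y) hd
  have hpar : ((supp y).card : ZMod 2) = 0 := by
    have h0 : ∑ i, c i = 0 := hc.1
    rw [hcy] at h0
    simp only [Pi.add_apply, Finset.sum_add_distrib] at h0
    rw [sum_ev, sum_ev, sum_eq_card_supp] at h0
    simp only [Finset.mem_univ, if_true] at h0
    have : ∀ a : ZMod 2, 1 + 1 + a = 0 → a = 0 := by decide
    exact this _ h0
  rcases card_even_le_two hsy hpar with h0 | h2
  · exfalso
    have : y = 0 := supp_empty_eq (Finset.card_eq_zero.mp h0)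
    rw [this, add_zero] at hcy
    exact hpq (code_pair_xor (hcy ▸ hc))
  · obtain ⟨r, s, hrs, hrss⟩ := Finset.card_eq_two.mp h2
    have hyrs : y = ev r + ev s := supp_pair_eq hrs hrss
    refine ⟨r, s, hrs, ?_, ?_⟩
    · rw [hyrs] at hcy
      have h4 : ev p + ev q + ev r + ev s ∈ extHamming k := by
        have : ev p + ev q + ev r + ev s = ev p + ev q + (ev r + ev s) := by
          rw [add_assoc]
        rw [this, ← hcy]; exact hc
      have hx := code_four_xor h4
      apply Nat.eq_of_testBit_eq
      intro i
      have hb := congrArg (fun n => Nat.testBit n i) hx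
      simp only [Nat.testBit_xor, Nat.zero_testBit] at hb
      simp only [Nat.testBit_xor]
      revert hb
      generalize p.val.testBit i = a
      generalize q.val.testBit i = b
      generalize r.val.testBit i = c'
      generalize s.val.testBit i = d
      revert a b c' d
      decide
    · rw [← hyrs]
      exact hd

end Core

end Stmt19
namespace Stmt19

open Finset

variable {k : ℕ} {E : Fin (2^k) → Fin (2^k) → Prop}

lemma xor_cancel_imp {a b c : ℕ} (h : a ^^^ b = a ^^^ c) : b = c := by
  apply Nat.eq_of_testBit_eq
  intro i
  have hb := congrArg (fun n => Nat.testBit n i) h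
  simp only [Nat.testBit_xor] at hb
  revert hb
  generalize a.testBit i = x
  generalize b.testBit i = y
  generalize c.testBit i = z
  revert x y z
  decide

section Pack

variable (hpack : IsPacking (dG E) (extHamming k) 2)

include hpack

lemma closed_pair_unique {r s x y : Fin (2^k)} (hrs : r ≠ s) (hxy : x ≠ y)
    (hw1 : wtG E (ev r + ev s) ≤ 2) (hw2 : wtG E (ev x + ev y) ≤ 2)
    (hxor : x.val ^^^ y.val = r.val ^^^ s.val) :
    (x = r ∧ y = s) ∨ (x = s ∧ y = r) := by
  by_cases hxr : x = r
  · left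
    refine ⟨hxr, ?_⟩
    subst hxr
    exact Fin.ext (xor_cancel_imp hxor)
  by_cases hxs : x = s
  · right
    refine ⟨hxs, ?_⟩
    subst hxs
    apply Fin.ext
    apply xor_cancel_imp (a := x.val)
    rw [hxor, Nat.xor_comm]
  exfalso
  have hyr : y ≠ r := by
    intro h
    subst h
    apply hxs
    apply Fin.ext
    apply xor_cancel_imp (a := y.val)
    rw [Nat.xor_comm y.val x.val, hxor, Nat.xor_comm]
  have hys : y ≠ s := by
    intro h
    subst h
    apply hxr
    apply Fin.ext
    apply xor_cancel_imp (a := y.val)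
    rw [Nat.xor_comm y.val x.val, hxor, Nat.xor_comm r.val y.val]
  -- four distinct vertices; build codeword
  have hcode : (ev x + ev y + ev r + ev s) ∈ extHamming k := by
    apply mem_code_four
    apply Nat.eq_of_testBit_eq
    intro i
    have hb := congrArg (fun n => Nat.testBit n i) hxor
    simp only [Nat.testBit_xor] at hb
    simp only [Nat.testBit_xor, Nat.zero_testBit]
    revert hb
    generalize x.val.testBit i = a
    generalize y.val.testBit i = b
    generalize r.val.testBit i = c
    generalize s.val.testBit i = d
    revert a b c d
    decide
  have hne : (0 : Fin (2^k) → ZMod 2) ≠ ev x + ev y + ev r + ev s := by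
    intro h
    have := congrFun h x
    simp [ev, Pi.add_apply, hxy, hxr, hxs] at this
  apply hpack 0 zero_mem_code _ hcode hne (ev x + ev y)
  constructor
  · rw [dG, sub_eq_add, zero_add]
    exact hw2
  · rw [dG, sub_eq_add]
    have : ev x + ev y + ev r + ev s + (ev x + ev y) = ev r + ev s := by
      funext i
      simp only [Pi.add_apply]
      have hz : ∀ a b c d : ZMod 2, a + b + c + d + (a + b) = c + d := by decide
      exact hz _ _ _ _
    rw [this]
    exact hw1

end Pack

end Stmt19
namespace Stmt19

open Finset

variable {k : ℕ} {E : Fin (2^k) → Fin (2^k) → Prop}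

def pA (E : Fin (2^k) → Fin (2^k) → Prop) (v : Fin (2^k)) : Prop := cl E v = {v}

def pM (E : Fin (2^k) → Fin (2^k) → Prop) (v : Fin (2^k)) : Prop :=
  ∃ u, u ≠ v ∧ cl E v = {v, u} ∧ v ∈ cl E u

def pT (E : Fin (2^k) → Fin (2^k) → Prop) (v : Fin (2^k)) : Prop :=
  ∃ u, u ≠ v ∧ cl E v = {v, u} ∧ v ∉ cl E u

lemma partner_eq {v u u' : Fin (2^k)} (hu : u ≠ v) (hu' : u' ≠ v)
    (h : cl E v = {v, u}) (h' : cl E v = {v, u'}) : u = u' := by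
  have : u ∈ cl E v := by rw [h]; simp
  rw [h'] at this
  simp only [Finset.mem_insert, Finset.mem_singleton] at this
  rcases this with h1 | h1
  · exact absurd h1 hu
  · exact h1

lemma not_pA_pM {v : Fin (2^k)} (h : pA E v) (h' : pM E v) : False := by
  obtain ⟨u, hu, hcl, _⟩ := h'
  rw [pA, hcl] at h
  have : u ∈ ({v} : Finset _) := by rw [← h]; simp
  simp only [Finset.mem_singleton] at this
  exact hu this

lemma not_pA_pT {v : Fin (2^k)} (h : pA E v) (h' : pT E v) : False := by
  obtain ⟨u, hu, hcl, _⟩ := h'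
  rw [pA, hcl] at h
  have : u ∈ ({v} : Finset _) := by rw [← h]; simp
  simp only [Finset.mem_singleton] at this
  exact hu this

lemma not_pM_pT {v : Fin (2^k)} (h : pM E v) (h' : pT E v) : False := by
  obtain ⟨u, hu, hcl, hm⟩ := h
  obtain ⟨u', hu', hcl', hm'⟩ := h'
  have := partner_eq hu hu' hcl hcl'
  subst this
  exact hm' hm

lemma trichotomy (hcl2 : ∀ v : Fin (2^k), (cl E v).card ≤ 2) (v : Fin (2^k)) :
    pA E v ∨ pM E v ∨ pT E v := by
  have hv : v ∈ cl E v := mem_cl_self v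
  have hpos : 1 ≤ (cl E v).card := Finset.card_pos.mpr ⟨v, hv⟩
  have hub := hcl2 v
  interval_cases h : (cl E v).card
  · left
    obtain ⟨w, hw⟩ := Finset.card_eq_one.mp h
    have : v = w := by
      have := hv; rw [hw] at this; simpa using this
    rw [pA, hw, this]
  · obtain ⟨x, y, hxy, hcl⟩ := Finset.card_eq_two.mp h
    have hvm : v = x ∨ v = y := by
      have := hv; rw [hcl] at this; simpa using this
    have : ∃ u, u ≠ v ∧ cl E v = {v, u} := by
      rcases hvm with h1 | h1
      · subst h1; exact ⟨y, fun hy => hxy hy.symm, hcl⟩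
      · subst h1
        refine ⟨x, fun hx => hxy hx, ?_⟩
        rw [hcl]; ext i; simp [or_comm]
    obtain ⟨u, hu, hclu⟩ := this
    by_cases hm : v ∈ cl E u
    · right; left; exact ⟨u, hu, hclu, hm⟩
    · right; right; exact ⟨u, hu, hclu, hm⟩

-- closed-pair structure: if (x,y) is a closed pair then cl x ∪ cl y = {x, y}
lemma closed_union_eq {x y : Fin (2^k)} (hxy : x ≠ y)
    (hw : wtG E (ev x + ev y) ≤ 2) : cl E x ∪ cl E y = {x, y} := by
  rw [wtG_pair hxy] at hw
  have hsub : ({x, y} : Finset _) ⊆ cl E x ∪ cl E y := by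
    intro i hi
    simp only [Finset.mem_insert, Finset.mem_singleton] at hi
    rcases hi with h | h
    · subst h; exact Finset.mem_union_left _ (mem_cl_self _)
    · subst h; exact Finset.mem_union_right _ (mem_cl_self _)
  have hc2 : (cl E x ∪ cl E y).card ≤ ({x, y} : Finset _).card := by
    rw [Finset.card_pair hxy]; exact hw
  exact (Finset.eq_of_subset_of_card_le hsub hc2).symm

lemma snd_unique_closed {x y u : Fin (2^k)} (hxy : x ≠ y)
    (hw : wtG E (ev x + ev y) ≤ 2) (hu : u ≠ x) (hcl : cl E x = {x, u}) : y = u := by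
  have h := closed_union_eq hxy hw
  have : u ∈ ({x, y} : Finset _) := by
    rw [← h]
    exact Finset.mem_union_left _ (by rw [hcl]; simp)
  simp only [Finset.mem_insert, Finset.mem_singleton] at this
  rcases this with h1 | h1
  · exact absurd h1 hu
  · exact h1.symm

lemma wt_pair_symm (x y : Fin (2^k)) :
    wtG E (ev x + ev y) = wtG E (ev y + ev x) := by rw [add_comm]

-- partner pair is closed
lemma pM_closed {v u : Fin (2^k)} (hcl2 : ∀ w : Fin (2^k), (cl E w).card ≤ 2)
    (hu : u ≠ v) (hcl : cl E v = {v, u}) (hm : v ∈ cl E u) :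
    wtG E (ev v + ev u) ≤ 2 := by
  have hclu : cl E u = {u, v} := by
    have h1 : ({u, v} : Finset _) ⊆ cl E u := by
      intro i hi
      simp only [Finset.mem_insert, Finset.mem_singleton] at hi
      rcases hi with h | h
      · subst h; exact mem_cl_self _
      · subst h; exact hm
    apply (Finset.eq_of_subset_of_card_le h1 ?_).symm
    rw [Finset.card_pair (fun h => hu h)]
    exact hcl2 u
  rw [wtG_pair (fun h => hu h.symm), hcl, hclu]
  have : ({v, u} : Finset (Fin (2^k))) ∪ {u, v} = {v, u} := by
    ext i; simp [or_comm]
  rw [this, Finset.card_pair (fun h => hu h.symm)]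

lemma pT_closed {v u : Fin (2^k)}
    (hu : u ≠ v) (hcl : cl E v = {v, u}) (hm : v ∉ cl E u) :
    wtG E (ev v + ev u) ≤ 2 ∧ cl E u = {u} := by
  have hclu : cl E u = {u} := by
    have h1 : cl E u ⊆ cl E v := by
      apply cl_subset
      rw [← mem_cl]
      rw [hcl]; simp
    rw [hcl] at h1
    have h2 : cl E u ⊆ {u} := by
      intro i hi
      have := h1 hi
      simp only [Finset.mem_insert, Finset.mem_singleton] at this
      rcases this with h | h
      · exact absurd (h ▸ hi) hm
      · simpa using h
    exact Finset.Subset.antisymm h2 (by simp [mem_cl_self])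
  constructor
  · rw [wtG_pair (fun h => hu h.symm), hcl, hclu]
    have : ({v, u} : Finset (Fin (2^k))) ∪ {u} = {v, u} := by
      ext i; simp [or_comm]
    rw [this, Finset.card_pair (fun h => hu h.symm)]
  · exact hclu

end Stmt19
namespace Stmt19

open Finset

variable {k : ℕ} {E : Fin (2^k) → Fin (2^k) → Prop}

noncomputable def OCP (E : Fin (2^k) → Fin (2^k) → Prop) : Finset (Fin (2^k) × Fin (2^k)) :=
  Finset.univ.filter (fun p => p.1 ≠ p.2 ∧ wtG E (ev p.1 + ev p.2) ≤ 2)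

lemma mem_OCP {p : Fin (2^k) × Fin (2^k)} :
    p ∈ OCP E ↔ p.1 ≠ p.2 ∧ wtG E (ev p.1 + ev p.2) ≤ 2 := by simp [OCP]

lemma range_filter_card : ((Finset.range (2^k)).filter (fun d => d ≠ 0)).card + 1 = 2^k := by
  have h0 : (0 : ℕ) ∈ Finset.range (2^k) := by
    simp [Nat.two_pow_pos k]
  have : Finset.range (2^k) = insert 0 ((Finset.range (2^k)).filter (fun d => d ≠ 0)) := by
    ext i
    simp only [Finset.mem_insert, Finset.mem_filter, Finset.mem_range]
    constructor
    · intro hi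
      by_cases h : i = 0
      · exact Or.inl h
      · exact Or.inr ⟨hi, h⟩
    · rintro (h | h)
      · subst h; simpa using h0
      · exact h.1
  have hcard := congrArg Finset.card this
  rw [Finset.card_insert_of_notMem (by simp), Finset.card_range] at hcard
  omega

section Count

variable (hcov : IsCovering (dG E) (extHamming k) 2)
  (hpack : IsPacking (dG E) (extHamming k) 2)

include hcov hpack

lemma OCP_card_eq :
    (OCP E).card = 2 * ((Finset.range (2^k)).filter (fun d => d ≠ 0)).card := by
  set D := (Finset.range (2^k)).filter (fun d => d ≠ 0) with hD
  have hmap : ∀ p ∈ OCP E, (p.1.val ^^^ p.2.val) ∈ D := by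
    intro p hp
    rw [mem_OCP] at hp
    rw [hD]
    simp only [Finset.mem_filter, Finset.mem_range]
    refine ⟨Nat.xor_lt_two_pow p.1.isLt p.2.isLt, ?_⟩
    intro h
    exact hp.1 (Fin.ext (Nat.xor_eq_zero_iff.mp h))
  rw [Finset.card_eq_sum_card_fiberwise hmap]
  have hfib : ∀ d ∈ D, ((OCP E).filter (fun p => p.1.val ^^^ p.2.val = d)).card = 2 := by
    intro d hd
    rw [hD] at hd
    simp only [Finset.mem_filter, Finset.mem_range] at hd
    set p0 : Fin (2^k) := ⟨0, Nat.two_pow_pos k⟩ with hp0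
    set q0 : Fin (2^k) := ⟨d, hd.1⟩ with hq0
    have hpq : p0 ≠ q0 := by
      intro h
      apply hd.2
      have := congrArg Fin.val h
      simpa [hp0, hq0] using this.symm
    obtain ⟨r, s, hrs, hxor, hw⟩ := exists_closed_pair hcov hpq
    have hxord : r.val ^^^ s.val = d := by
      rw [hxor]; simp [hp0, hq0]
    have hset : (OCP E).filter (fun p => p.1.val ^^^ p.2.val = d) = {(r, s), (s, r)} := by
      ext p
      simp only [Finset.mem_filter, Finset.mem_insert, Finset.mem_singleton]
      constructor
      · rintro ⟨hp, hpd⟩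
        rw [mem_OCP] at hp
        have := closed_pair_unique hpack hrs hp.1 hw hp.2 (by rw [hpd, hxord])
        rcases this with ⟨h1, h2⟩ | ⟨h1, h2⟩
        · left; exact Prod.ext h1 h2
        · right; exact Prod.ext h1 h2
      · rintro (h | h) <;> subst h
        · exact ⟨mem_OCP.mpr ⟨hrs, hw⟩, hxord⟩
        · refine ⟨mem_OCP.mpr ⟨hrs.symm, by rw [← wt_pair_symm]; exact hw⟩, ?_⟩
          simp only
          rw [Nat.xor_comm]
          exact hxord
    rw [hset, Finset.card_pair]
    intro h
    exact hrs (congrArg Prod.fst h)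
  rw [Finset.sum_congr rfl hfib, Finset.sum_const, smul_eq_mul, mul_comm]

end Count

end Stmt19
namespace Stmt19

open Finset

variable {k : ℕ} {E : Fin (2^k) → Fin (2^k) → Prop}

lemma OCP_symm {x y : Fin (2^k)} (h : (x, y) ∈ OCP E) : (y, x) ∈ OCP E := by
  rw [mem_OCP] at h ⊢
  exact ⟨fun hh => h.1 hh.symm, by rw [← wt_pair_symm]; exact h.2⟩

lemma pA_fst_not_pM_snd {x y : Fin (2^k)} (hp : (x, y) ∈ OCP E)
    (hA : pA E x) (hM : pM E y) : False := by
  obtain ⟨u, hu, hcl, hyu⟩ := hM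
  have h1 : (y, x) ∈ OCP E := OCP_symm hp
  rw [mem_OCP] at h1
  have hxu : x = u := snd_unique_closed h1.1 h1.2 hu hcl
  subst hxu
  rw [hA] at hyu
  have : y = x := by simpa using hyu
  exact h1.1 this

section Parts

variable (hcl2 : ∀ v : Fin (2^k), (cl E v).card ≤ 2)

noncomputable def Apart (E : Fin (2^k) → Fin (2^k) → Prop) : Finset (Fin (2^k)) :=
  Finset.univ.filter (pA E)
noncomputable def Mpart (E : Fin (2^k) → Fin (2^k) → Prop) : Finset (Fin (2^k)) :=
  Finset.univ.filter (pM E)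
noncomputable def Tpart (E : Fin (2^k) → Fin (2^k) → Prop) : Finset (Fin (2^k)) :=
  Finset.univ.filter (pT E)

include hcl2

lemma univ_card_split :
    (Apart E).card + (Mpart E).card + (Tpart E).card = 2^k := by
  have h1 := Finset.card_filter_add_card_filter_not
    (s := (Finset.univ : Finset (Fin (2^k)))) (p := pA E)
  have h2 : Finset.univ.filter (fun v => ¬ pA E v) = Mpart E ∪ Tpart E := by
    ext v
    simp only [Finset.mem_filter, Finset.mem_univ, true_and, Finset.mem_union,
      Mpart, Tpart]
    constructor
    · intro h
      rcases trichotomy hcl2 v with h' | h' | h'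
      · exact absurd h' h
      · exact Or.inl h'
      · exact Or.inr h'
    · rintro (h | h)
      · exact fun hA => not_pA_pM hA h
      · exact fun hA => not_pA_pT hA h
  have h3 : (Mpart E ∪ Tpart E).card = (Mpart E).card + (Tpart E).card := by
    apply Finset.card_union_of_disjoint
    rw [Finset.disjoint_left]
    intro v hv hv'
    simp only [Mpart, Tpart, Finset.mem_filter] at hv hv'
    exact not_pM_pT hv.2 hv'.2
  rw [h2, h3] at h1
  have h4 : (Finset.univ : Finset (Fin (2^k))).card = 2^k := by simp
  simp only [Apart, Mpart, Tpart] at h1 h3 ⊢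
  omega

end Parts

end Stmt19
namespace Stmt19

open Finset

variable {k : ℕ} {E : Fin (2^k) → Fin (2^k) → Prop}

section Parts2

variable (hcl2 : ∀ v : Fin (2^k), (cl E v).card ≤ 2)

include hcl2

lemma MM_card :
    ((OCP E).filter (fun p => pM E p.1)).card = (Mpart E).card := by
  apply Finset.card_bij (i := fun p _ => p.1)
  · intro p hp
    simp only [Finset.mem_filter] at hp
    simp only [Mpart, Finset.mem_filter]
    exact ⟨Finset.mem_univ _, hp.2⟩
  · intro p hp q hq h
    simp only [Finset.mem_filter, mem_OCP] at hp hq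
    obtain ⟨u, hu, hcl, hm⟩ := hp.2
    have hp2 : p.2 = u := snd_unique_closed hp.1.1 hp.1.2 hu hcl
    have hq2 : q.2 = u := snd_unique_closed hq.1.1 hq.1.2 (h ▸ hu) (h ▸ hcl)
    exact Prod.ext h (by rw [hp2, hq2])
  · intro v hv
    simp only [Mpart, Finset.mem_filter] at hv
    obtain ⟨u, hu, hcl, hm⟩ := hv.2
    refine ⟨(v, u), ?_, rfl⟩
    simp only [Finset.mem_filter, mem_OCP]
    exact ⟨⟨fun h => hu h.symm, pM_closed hcl2 hu hcl hm⟩, hv.2⟩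

lemma TT_card :
    ((OCP E).filter (fun p => pT E p.1)).card = (Tpart E).card := by
  apply Finset.card_bij (i := fun p _ => p.1)
  · intro p hp
    simp only [Finset.mem_filter] at hp
    simp only [Tpart, Finset.mem_filter]
    exact ⟨Finset.mem_univ _, hp.2⟩
  · intro p hp q hq h
    simp only [Finset.mem_filter, mem_OCP] at hp hq
    obtain ⟨u, hu, hcl, hm⟩ := hp.2
    have hp2 : p.2 = u := snd_unique_closed hp.1.1 hp.1.2 hu hcl
    have hq2 : q.2 = u := snd_unique_closed hq.1.1 hq.1.2 (h ▸ hu) (h ▸ hcl)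
    exact Prod.ext h (by rw [hp2, hq2])
  · intro v hv
    simp only [Tpart, Finset.mem_filter] at hv
    obtain ⟨u, hu, hcl, hm⟩ := hv.2
    refine ⟨(v, u), ?_, rfl⟩
    simp only [Finset.mem_filter, mem_OCP]
    exact ⟨⟨fun h => hu h.symm, (pT_closed hu hcl hm).1⟩, hv.2⟩

lemma AT_card :
    ((OCP E).filter (fun p => pA E p.1 ∧ pT E p.2)).card = (Tpart E).card := by
  apply Finset.card_bij (i := fun p _ => p.2)
  · intro p hp
    simp only [Finset.mem_filter] at hp
    simp only [Tpart, Finset.mem_filter]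
    exact ⟨Finset.mem_univ _, hp.2.2⟩
  · intro p hp q hq h
    simp only [Finset.mem_filter, mem_OCP] at hp hq
    obtain ⟨u, hu, hcl, hm⟩ := hp.2.2
    have hps : (p.2, p.1) ∈ OCP E := OCP_symm (x := p.1) (y := p.2) (mem_OCP.mpr hp.1)
    have hqs : (q.2, q.1) ∈ OCP E := OCP_symm (x := q.1) (y := q.2) (mem_OCP.mpr hq.1)
    rw [mem_OCP] at hps hqs
    have hp1 : p.1 = u := snd_unique_closed hps.1 hps.2 hu hcl
    have hq1 : q.1 = u := snd_unique_closed hqs.1 hqs.2 (h ▸ hu) (h ▸ hcl)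
    exact Prod.ext (by rw [hp1, hq1]) h
  · intro t ht
    simp only [Tpart, Finset.mem_filter] at ht
    obtain ⟨u, hu, hcl, hm⟩ := ht.2
    refine ⟨(u, t), ?_, rfl⟩
    have hTc := pT_closed (E := E) hu hcl hm
    simp only [Finset.mem_filter, mem_OCP]
    refine ⟨⟨hu, ?_⟩, hTc.2, ht.2⟩
    rw [← wt_pair_symm]
    exact hTc.1

lemma AA_card :
    ((OCP E).filter (fun p => pA E p.1 ∧ pA E p.2)).card + (Apart E).card
      = (Apart E).card * (Apart E).card := by
  have hset : (OCP E).filter (fun p => pA E p.1 ∧ pA E p.2)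
      = ((Apart E) ×ˢ (Apart E)).filter (fun p => ¬ p.1 = p.2) := by
    ext p
    simp only [Finset.mem_filter, mem_OCP, Finset.mem_product, Apart,
      Finset.mem_univ, true_and]
    constructor
    · rintro ⟨⟨hne, _⟩, hA1, hA2⟩
      exact ⟨⟨hA1, hA2⟩, hne⟩
    · rintro ⟨⟨hA1, hA2⟩, hne⟩
      refine ⟨⟨hne, ?_⟩, hA1, hA2⟩
      rw [wtG_pair hne, hA1, hA2]
      calc ({p.1} ∪ {p.2} : Finset _).card ≤ ({p.1} : Finset _).card + ({p.2} : Finset _).card :=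
            Finset.card_union_le _ _
        _ = 2 := by simp
  have hdiag : (((Apart E) ×ˢ (Apart E)).filter (fun p => p.1 = p.2)).card
      = (Apart E).card := by
    apply Finset.card_bij (i := fun p _ => p.1)
    · intro p hp
      simp only [Finset.mem_filter, Finset.mem_product] at hp
      exact hp.1.1
    · intro p hp q hq h
      simp only [Finset.mem_filter] at hp hq
      exact Prod.ext h (by rw [← hp.2, ← hq.2, h])
    · intro a ha
      refine ⟨(a, a), ?_, rfl⟩
      simp only [Finset.mem_filter, Finset.mem_product]
      exact ⟨⟨ha, ha⟩, trivial⟩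
  have hsplit := Finset.card_filter_add_card_filter_not
    (s := (Apart E) ×ˢ (Apart E)) (p := fun p => p.1 = p.2)
  rw [hdiag] at hsplit
  rw [hset]
  have hprod : ((Apart E) ×ˢ (Apart E)).card = (Apart E).card * (Apart E).card :=
    Finset.card_product _ _
  omega

lemma OCP_split :
    (OCP E).card
      = ((OCP E).filter (fun p => pA E p.1 ∧ pA E p.2)).card
        + ((OCP E).filter (fun p => pA E p.1 ∧ pT E p.2)).card
        + ((OCP E).filter (fun p => pM E p.1)).card
        + ((OCP E).filter (fun p => pT E p.1)).card := by
  have h1 := Finset.card_filter_add_card_filter_not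
    (s := OCP E) (p := fun p => pA E p.1)
  have h2 := Finset.card_filter_add_card_filter_not
    (s := (OCP E).filter (fun p => pA E p.1)) (p := fun p => pA E p.2)
  have e1 : ((OCP E).filter (fun p => pA E p.1)).filter (fun p => pA E p.2)
      = (OCP E).filter (fun p => pA E p.1 ∧ pA E p.2) := by
    rw [Finset.filter_filter]
  have e2 : ((OCP E).filter (fun p => pA E p.1)).filter (fun p => ¬ pA E p.2)
      = (OCP E).filter (fun p => pA E p.1 ∧ pT E p.2) := by
    rw [Finset.filter_filter]
    apply Finset.filter_congr
    intro p hp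
    constructor
    · rintro ⟨hA1, hnA2⟩
      refine ⟨hA1, ?_⟩
      rcases trichotomy hcl2 p.2 with h | h | h
      · exact absurd h hnA2
      · exact absurd h (fun hM => pA_fst_not_pM_snd (by simpa using hp) hA1 hM)
      · exact h
    · rintro ⟨hA1, hT2⟩
      exact ⟨hA1, fun hA2 => not_pA_pT hA2 hT2⟩
  have h3 := Finset.card_filter_add_card_filter_not
    (s := (OCP E).filter (fun p => ¬ pA E p.1)) (p := fun p => pM E p.1)
  have e3 : ((OCP E).filter (fun p => ¬ pA E p.1)).filter (fun p => pM E p.1)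
      = (OCP E).filter (fun p => pM E p.1) := by
    rw [Finset.filter_filter]
    apply Finset.filter_congr
    intro p hp
    simp only [and_iff_right_iff_imp]
    exact fun hM hA => not_pA_pM hA hM
  have e4 : ((OCP E).filter (fun p => ¬ pA E p.1)).filter (fun p => ¬ pM E p.1)
      = (OCP E).filter (fun p => pT E p.1) := by
    rw [Finset.filter_filter]
    apply Finset.filter_congr
    intro p hp
    constructor
    · rintro ⟨hnA, hnM⟩
      rcases trichotomy hcl2 p.1 with h | h | h
      · exact absurd h hnA
      · exact absurd h hnM
      · exact h
    · intro hT
      exact ⟨fun hA => not_pA_pT hA hT, fun hM => not_pM_pT hM hT⟩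
  rw [e1, e2] at h2
  rw [e3, e4] at h3
  omega

end Parts2

end Stmt19
namespace Stmt19

open Finset

variable {k : ℕ} {E : Fin (2^k) → Fin (2^k) → Prop}

lemma clsLe_refl (c : Quotient (simSetoid E)) : clsLe E c c := Or.inl rfl

lemma Omega_one (ω : ℕ) :
    Omega (clsLe E) (clsWt E) 1 ω 1
      = (Finset.univ.filter (fun c : Quotient (simSetoid E) =>
          clsWt E c = ω ∧ ∀ b, clsLe E b c → b = c)).card := by
  unfold Omega
  symm
  apply Finset.card_bij (i := fun c _ => ({c} : Finset (Quotient (simSetoid E))))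
  · intro c hc
    simp only [Finset.mem_filter, Finset.mem_univ, true_and] at hc
    simp only [Finset.mem_filter, Finset.mem_univ, true_and]
    refine ⟨?_, Finset.card_singleton _, ?_, ?_⟩
    · intro a ha b hb
      simp only [Finset.mem_singleton] at ha ⊢
      subst ha
      exact hc.2 b hb
    · rw [Finset.sum_singleton, hc.1]
    · apply Finset.card_eq_one.mpr
      refine ⟨c, ?_⟩
      ext a
      simp only [Finset.mem_filter, Finset.mem_singleton]
      constructor
      · exact fun h => h.1
      · intro ha
        subst ha
        refine ⟨rfl, ?_⟩
        intro b hb _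
        exact hb.symm
  · intro c hc c' hc' h
    exact Finset.singleton_inj.mp h
  · intro I hI
    simp only [Finset.mem_filter, Finset.mem_univ, true_and] at hI
    obtain ⟨c, hc⟩ := Finset.card_eq_one.mp hI.2.1
    refine ⟨c, ?_, hc.symm⟩
    simp only [Finset.mem_filter, Finset.mem_univ, true_and]
    constructor
    · rw [← hI.2.2.1, hc, Finset.sum_singleton]
    · intro b hb
      have := hI.1 c (by rw [hc]; simp) b hb
      rw [hc] at this
      simpa using this

lemma simE_iff {u v : Fin (2^k)} :
    Quotient.mk (simSetoid E) u = Quotient.mk (simSetoid E) v ↔ sim E u v := by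
  rw [Quotient.eq]
  rfl

lemma card_A_eq_omega :
    Omega (clsLe E) (clsWt E) 1 1 1 = (Apart E).card := by
  rw [Omega_one]
  symm
  apply Finset.card_bij (i := fun v _ => Quotient.mk (simSetoid E) v)
  · intro v hv
    simp only [Apart, Finset.mem_filter, Finset.mem_univ, true_and] at hv
    simp only [Finset.mem_filter, Finset.mem_univ, true_and]
    have hclass : Finset.univ.filter
        (fun w => Quotient.mk (simSetoid E) w = Quotient.mk (simSetoid E) v) = {v} := by
      ext w
      simp only [Finset.mem_filter, Finset.mem_univ, true_and, Finset.mem_singleton]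
      rw [simE_iff]
      constructor
      · rintro (h | ⟨h1, h2⟩)
        · exact h
        · have : w ∈ cl E v := mem_cl.mpr h2.to_reflTransGen
          rw [hv] at this
          simpa using this
      · intro h; subst h; exact Or.inl rfl
    constructor
    · rw [clsWt, hclass, Finset.card_singleton]
    · intro b hb
      rcases hb with h | ⟨x, y, hx, hy, ht⟩
      · exact h
      · have hyv : Relation.ReflTransGen E v y := by
          rw [simE_iff] at hy
          rcases hy with h | ⟨h1, h2⟩
          · subst h; exact Relation.ReflTransGen.refl
          · exact h2.to_reflTransGen
        have hvx : Relation.ReflTransGen E v x := hyv.trans ht.to_reflTransGen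
        have : x ∈ cl E v := mem_cl.mpr hvx
        rw [hv] at this
        simp only [Finset.mem_singleton] at this
        subst this
        exact hx.symm
  · intro v hv v' hv' h
    simp only [Apart, Finset.mem_filter, Finset.mem_univ, true_and] at hv hv'
    rw [simE_iff] at h
    rcases h with h | ⟨h1, h2⟩
    · exact h
    · have hm : v' ∈ cl E v := mem_cl.mpr h1.to_reflTransGen
      rw [hv] at hm
      have h3 : v' = v := by simpa using hm
      exact h3.symm
  · intro c hc
    simp only [Finset.mem_filter, Finset.mem_univ, true_and] at hc
    obtain ⟨v, hv⟩ := Quotient.exists_rep c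
    refine ⟨v, ?_, hv⟩
    simp only [Apart, Finset.mem_filter, Finset.mem_univ, true_and]
    -- show cl E v = {v}
    ext w
    simp only [mem_cl, Finset.mem_singleton]
    constructor
    · intro hw
      rcases Relation.reflTransGen_iff_eq_or_transGen.mp hw with h | h
      · exact h
      · -- TransGen v w, so class of w ≤ class of v, minimality forces equality
        have hle : clsLe E (Quotient.mk (simSetoid E) w) c :=
          Or.inr ⟨w, v, rfl, hv, h⟩
        have := hc.2 _ hle
        rw [← hv, simE_iff] at this
        rcases this with h' | ⟨h1, h2⟩
        · exact h'
        · by_cases hwv : w = v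
          · exact hwv
          exfalso
          have hsub : ({w, v} : Finset _) ⊆ Finset.univ.filter
              (fun u => Quotient.mk (simSetoid E) u = c) := by
            intro i hi
            simp only [Finset.mem_insert, Finset.mem_singleton] at hi
            simp only [Finset.mem_filter, Finset.mem_univ, true_and]
            rcases hi with h | h
            · subst h; rw [← hv, simE_iff]; exact Or.inr ⟨h1, h2⟩
            · subst h; exact hv
          have h2card : 2 ≤ (Finset.univ.filter
              (fun u => Quotient.mk (simSetoid E) u = c)).card := by
            calc 2 = ({w, v} : Finset _).card := (Finset.card_pair hwv).symm
              _ ≤ _ := Finset.card_le_card hsub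
          have hwt := hc.1
          rw [clsWt] at hwt
          omega
    · intro h; subst h; exact Relation.ReflTransGen.refl

end Stmt19
namespace Stmt19

open Finset

variable {k : ℕ} {E : Fin (2^k) → Fin (2^k) → Prop}

lemma M_card_eq :
    (Mpart E).card = 2 * Omega (clsLe E) (clsWt E) 1 2 1 := by
  rw [Omega_one]
  set Q2 := Finset.univ.filter (fun c : Quotient (simSetoid E) =>
    clsWt E c = 2 ∧ ∀ b, clsLe E b c → b = c) with hQ2
  have hmap : ∀ v ∈ Mpart E, Quotient.mk (simSetoid E) v ∈ Q2 := by
    intro v hv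
    simp only [Mpart, Finset.mem_filter, Finset.mem_univ, true_and] at hv
    obtain ⟨u, hu, hcl, hm⟩ := hv
    have huv : Relation.TransGen E u v := by
      rcases Relation.reflTransGen_iff_eq_or_transGen.mp (mem_cl.mp hm) with h | h
      · exact absurd h.symm hu
      · exact h
    have hvu : Relation.TransGen E v u := by
      have : u ∈ cl E v := by rw [hcl]; simp
      rcases Relation.reflTransGen_iff_eq_or_transGen.mp (mem_cl.mp this) with h | h
      · exact absurd h hu
      · exact h
    have hsimuv : sim E u v := Or.inr ⟨huv, hvu⟩
    have hclass : Finset.univ.filter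
        (fun w => Quotient.mk (simSetoid E) w = Quotient.mk (simSetoid E) v) = {v, u} := by
      ext w
      simp only [Finset.mem_filter, Finset.mem_univ, true_and, Finset.mem_insert,
        Finset.mem_singleton]
      rw [simE_iff]
      constructor
      · rintro (h | ⟨h1, h2⟩)
        · exact Or.inl h
        · have : w ∈ cl E v := mem_cl.mpr h2.to_reflTransGen
          rw [hcl] at this
          simpa using this
      · rintro (h | h)
        · subst h; exact Or.inl rfl
        · subst h; exact hsimuv
    rw [hQ2]
    simp only [Finset.mem_filter, Finset.mem_univ, true_and]
    constructor
    · rw [clsWt, hclass, Finset.card_pair (fun h => hu h.symm)]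
    · intro b hb
      rcases hb with h | ⟨x, y, hx, hy, ht⟩
      · exact h
      · have hyv : Relation.ReflTransGen E v y := by
          rw [simE_iff] at hy
          rcases hy with h | ⟨h1, h2⟩
          · subst h; exact Relation.ReflTransGen.refl
          · exact h2.to_reflTransGen
        have hvx : x ∈ cl E v := mem_cl.mpr (hyv.trans ht.to_reflTransGen)
        rw [hcl] at hvx
        simp only [Finset.mem_insert, Finset.mem_singleton] at hvx
        rcases hvx with h | h
        · subst h; exact hx.symm
        · subst h
          exact hx.symm.trans (simE_iff.mpr hsimuv)
  rw [Finset.card_eq_sum_card_fiberwise hmap]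
  have hfib : ∀ c ∈ Q2, ((Mpart E).filter
      (fun v => Quotient.mk (simSetoid E) v = c)).card = 2 := by
    intro c hc
    rw [hQ2] at hc
    simp only [Finset.mem_filter, Finset.mem_univ, true_and] at hc
    have hwt := hc.1
    rw [clsWt] at hwt
    -- the class has exactly two elements
    obtain ⟨x, y, hxy, hclassxy⟩ := Finset.card_eq_two.mp hwt
    have hxc : Quotient.mk (simSetoid E) x = c := by
      have : x ∈ Finset.univ.filter (fun v => Quotient.mk (simSetoid E) v = c) := by
        rw [hclassxy]; simp
      simpa using this
    have hyc : Quotient.mk (simSetoid E) y = c := by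
      have : y ∈ Finset.univ.filter (fun v => Quotient.mk (simSetoid E) v = c) := by
        rw [hclassxy]; simp
      simpa using this
    have key : ∀ a b : Fin (2^k), a ≠ b → Quotient.mk (simSetoid E) a = c →
        Quotient.mk (simSetoid E) b = c → pM E a := by
      intro a b hab ha hb
      have hsim : sim E a b := simE_iff.mp (ha.trans hb.symm)
      rcases hsim with h | ⟨t1, t2⟩
      · exact absurd h hab
      refine ⟨b, hab.symm, ?_, mem_cl.mpr t2.to_reflTransGen⟩
      ext z
      simp only [mem_cl, Finset.mem_insert, Finset.mem_singleton]
      constructor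
      · intro hz
        rcases Relation.reflTransGen_iff_eq_or_transGen.mp hz with h | h
        · exact Or.inl h
        · have hle : clsLe E (Quotient.mk (simSetoid E) z) c := Or.inr ⟨z, a, rfl, ha, h⟩
          have hzc := hc.2 _ hle
          have hzmem : z ∈ Finset.univ.filter
              (fun v => Quotient.mk (simSetoid E) v = c) := by
            simp only [Finset.mem_filter, Finset.mem_univ, true_and]
            exact hzc
          rw [hclassxy] at hzmem
          simp only [Finset.mem_insert, Finset.mem_singleton] at hzmem
          -- z ∈ {x, y}; also a, b ∈ {x, y} and a ≠ b, so {a,b} = {x,y}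
          have hamem : a = x ∨ a = y := by
            have : a ∈ Finset.univ.filter
                (fun v => Quotient.mk (simSetoid E) v = c) := by
              simp only [Finset.mem_filter, Finset.mem_univ, true_and]; exact ha
            rw [hclassxy] at this
            simpa using this
          have hbmem : b = x ∨ b = y := by
            have : b ∈ Finset.univ.filter
                (fun v => Quotient.mk (simSetoid E) v = c) := by
              simp only [Finset.mem_filter, Finset.mem_univ, true_and]; exact hb
            rw [hclassxy] at this
            simpa using this
          rcases hamem with h1 | h1 <;> rcases hbmem with h2 | h2 <;>
            rcases hzmem with h3 | h3 <;> subst_vars <;> tauto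
      · rintro (h | h)
        · subst h; exact Relation.ReflTransGen.refl
        · subst h; exact t1.to_reflTransGen
    have hfibeq : (Mpart E).filter (fun v => Quotient.mk (simSetoid E) v = c)
        = {x, y} := by
      ext w
      simp only [Finset.mem_filter, Mpart, Finset.mem_univ, true_and,
        Finset.mem_insert, Finset.mem_singleton]
      constructor
      · rintro ⟨_, hwc⟩
        have : w ∈ Finset.univ.filter
            (fun v => Quotient.mk (simSetoid E) v = c) := by
          simp only [Finset.mem_filter, Finset.mem_univ, true_and]; exact hwc
        rw [hclassxy] at this
        simpa using this
      · rintro (h | h)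
        · subst h; exact ⟨key w y hxy hxc hyc, hxc⟩
        · subst h; exact ⟨key w x (fun hh => hxy hh.symm) hyc hxc, hyc⟩
    rw [hfibeq, Finset.card_pair hxy]
  rw [Finset.sum_congr rfl hfib, Finset.sum_const, smul_eq_mul, mul_comm]

end Stmt19
theorem stmt_19 {k : ℕ} (hk : 2 ≤ k)
    (E : Fin (2 ^ k) → Fin (2 ^ k) → Prop) (hirrefl : ∀ v, ¬ E v v)
    (hperf : IsCovering (dG E) (extHamming k) 2 ∧
      IsPacking (dG E) (extHamming k) 2) :
    2 * (Omega (clsLe E) (clsWt E) 1 2 1 : ℤ) =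
      2 + (Omega (clsLe E) (clsWt E) 1 1 1 : ℤ) *
        ((Omega (clsLe E) (clsWt E) 1 1 1 : ℤ) - 3) := by
  classical
  obtain ⟨hcov, hpack⟩ := hperf
  have hcl2 : ∀ v : Fin (2^k), (Stmt19.cl E v).card ≤ 2 := Stmt19.cl_card_le_two hcov
  have h1 := Stmt19.univ_card_split (E := E) hcl2
  have h2 := Stmt19.OCP_card_eq hcov hpack
  have h3 := Stmt19.OCP_split (E := E) hcl2
  have h4 := Stmt19.MM_card (E := E) hcl2
  have h5 := Stmt19.TT_card (E := E) hcl2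
  have h6 := Stmt19.AT_card (E := E) hcl2
  have h7 := Stmt19.AA_card (E := E) hcl2
  have h8 := Stmt19.range_filter_card (k := k)
  have hA := Stmt19.card_A_eq_omega (E := E)
  have hM := Stmt19.M_card_eq (E := E)
  -- derive M + 3A = A*A + 2 over ℕ
  set a := (Stmt19.Apart E).card with ha
  set m := (Stmt19.Mpart E).card with hm
  set t := (Stmt19.Tpart E).card with ht
  have hP : (Stmt19.Apart E).card * (Stmt19.Apart E).card = a * a := rfl
  have hkey : m + 3 * a = a * a + 2 := by
    set P := a * a with hPP
    rw [hP] at h7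
    omega
  rw [hA]
  have hMz : (m : ℤ) = 2 * (Omega (clsLe E) (clsWt E) 1 2 1 : ℤ) := by
    exact_mod_cast congrArg (fun n : ℕ => (n : ℤ)) hM
  have hkeyz : (m : ℤ) + 3 * (a : ℤ) = (a : ℤ) * (a : ℤ) + 2 := by exact_mod_cast hkey
  linarith [hMz, hkeyz]
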